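/- Let c : ℝ → ℝ be measurable and 1-periodic with 0 < λ ≤ c(y) ≤ Λ for all y. Suppose p : ℝ → ℝ is 1-periodic, integrable on [0,1], nonnegative almost everywhere, with ∫₀¹ p(y) dy = 1 and ∫₀¹ c(y) p(y) φ''(y) dy = 0 for every C², 1-periodic φ : ℝ → ℝ. Then p(y) = HM(c)/c(y) for almost every y; in particular the invariant probability density for the one-dimensional operator with coefficient c is unique. -/

import Mathlib

open MeasureTheory

open scoped ContDiff

/-- Harmonic mean of a 1-periodic function over one period:
`HM(b) = (∫₀¹ 1/b(y) dy)⁻¹`. -/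
noncomputable def HM (b : ℝ → ℝ) : ℝ := (∫ y in (0:ℝ)..1, (b y)⁻¹)⁻¹

/-- A 1-periodic function vanishing a.e. on `(0,1)` vanishes a.e. on `ℝ`. -/
lemma periodic_ae_zero_aux (q : ℝ → ℝ) (hper : ∀ y, q (y + 1) = q y)
    (h : ∀ᵐ y ∂(volume : Measure ℝ), y ∈ Set.Ioo (0:ℝ) 1 → q y = 0) :
    ∀ᵐ y ∂(volume : Measure ℝ), q y = 0 := by
  have hq : Function.Periodic q 1 := hper
  rw [ae_iff] at h ⊢
  set T : Set ℝ := {y | ¬ (y ∈ Set.Ioo (0:ℝ) 1 → q y = 0)} with hT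
  set N := toMeasurable volume T with hN
  have hNnull : volume N = 0 := by rw [hN, measure_toMeasurable]; exact h
  have hTN : T ⊆ N := subset_toMeasurable _ _
  set Bad : Set ℝ := (⋃ n : ℤ, (fun y => y - (n:ℝ)) ⁻¹' N) ∪ (Set.range ((↑) : ℤ → ℝ))
    with hBadDef
  have hBad : volume Bad = 0 := by
    apply measure_union_null
    · refine measure_iUnion_null fun n => ?_
      have e : (fun y : ℝ => y - (n:ℝ)) = (fun y => (-(n:ℝ)) + y) := by funext y; ring
      rw [e, measure_preimage_add]
      exact hNnull
    · exact (Set.countable_range _).measure_zero _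
  refine measure_mono_null ?_ hBad
  intro y hy
  by_contra hyBad
  apply hy
  simp only [hBadDef, Set.mem_union, Set.mem_iUnion, not_or, not_exists, Set.mem_preimage,
    Set.mem_range] at hyBad
  obtain ⟨h1, h2⟩ := hyBad
  have hfr0 : Int.fract y ≠ 0 := by
    intro h0
    have h3 := Int.fract_add_floor y
    rw [h0, zero_add] at h3
    exact h2 ⌊y⌋ h3
  have hfrIoo : Int.fract y ∈ Set.Ioo (0:ℝ) 1 :=
    ⟨lt_of_le_of_ne (Int.fract_nonneg y) (Ne.symm hfr0), Int.fract_lt_one y⟩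
  have hfrN : Int.fract y ∉ N := by
    have h4 := h1 ⌊y⌋
    rwa [Int.self_sub_floor] at h4
  have hqfr : q (Int.fract y) = 0 := by
    have h5 : Int.fract y ∉ T := fun hmem => hfrN (hTN hmem)
    rw [hT, Set.mem_setOf_eq, not_not] at h5
    exact h5 hfrIoo
  have hp := (hq.int_mul ⌊y⌋) (Int.fract y)
  simp only [mul_one] at hp
  rw [Int.fract_add_floor] at hp
  rw [hp]
  exact hqfr

/-- From a smooth mean-zero function supported in `(0,1)`, build a periodic `C²` function
whose second derivative agrees with it on `(0,1)`. -/
lemma exists_periodic_test (η : ℝ → ℝ) (hη : ContDiff ℝ ∞ η)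
    (hsupp : tsupport η ⊆ Set.Ioo (0:ℝ) 1)
    (hmean : ∫ y in (0:ℝ)..1, η y = 0) :
    ∃ φ : ℝ → ℝ, ContDiff ℝ 2 φ ∧ (∀ y, φ (y + 1) = φ y) ∧
      ∀ y ∈ Set.Ioo (0:ℝ) 1, deriv (deriv φ) y = η y := by
  have ηcont : Continuous η := hη.continuous
  obtain ⟨a, b, ha, ha1, hb0, hb, hza, hzb⟩ :
      ∃ a b : ℝ, 0 < a ∧ a < 1 ∧ 0 < b ∧ b < 1 ∧ (∀ t, t ≤ a → η t = 0) ∧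
        (∀ t, b ≤ t → η t = 0) := by
    have hKc : IsCompact (tsupport η) := by
      apply Metric.isCompact_of_isClosed_isBounded (isClosed_tsupport η)
      exact (Metric.isBounded_Ioo (0:ℝ) 1).subset hsupp
    rcases Set.eq_empty_or_nonempty (tsupport η) with hKe | hKne
    · refine ⟨1/2, 1/2, by norm_num, by norm_num, by norm_num, by norm_num, ?_, ?_⟩ <;>
        · intro t _
          apply image_eq_zero_of_notMem_tsupport
          simp [hKe]
    · obtain ⟨m, hm⟩ := hKc.exists_isLeast hKne
      obtain ⟨M, hM⟩ := hKc.exists_isGreatest hKne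
      have hmI := hsupp hm.1
      have hMI := hsupp hM.1
      refine ⟨m/2, (M+1)/2, by linarith [hmI.1], by linarith [hmI.2], by linarith [hMI.1],
        by linarith [hMI.2], ?_, ?_⟩
      · intro t ht
        apply image_eq_zero_of_notMem_tsupport
        intro htK
        linarith [hm.2 htK, hmI.1]
      · intro t ht
        apply image_eq_zero_of_notMem_tsupport
        intro htK
        linarith [hM.2 htK, hMI.2]
  set A : ℝ → ℝ := fun y => ∫ t in (0:ℝ)..y, η t with hAdef
  have hAderiv : ∀ y, HasDerivAt A (η y) y := fun y =>
    intervalIntegral.integral_hasDerivAt_right (ηcont.intervalIntegrable 0 y)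
      (ηcont.stronglyMeasurableAtFilter (μ := volume) (l := nhds y)) ηcont.continuousAt
  have hderivA : deriv A = η := funext fun y => (hAderiv y).deriv
  have hAsmooth : ContDiff ℝ ∞ A := by
    rw [contDiff_infty_iff_deriv]
    exact ⟨fun y => (hAderiv y).differentiableAt, by rw [hderivA]; exact hη⟩
  have hA0 : ∀ y, y ≤ a → A y = 0 := by
    intro y hy
    show ∫ t in (0:ℝ)..y, η t = 0
    rw [intervalIntegral.integral_congr (g := fun _ => (0:ℝ))
      (fun t ht => hza t (le_trans ht.2 (sup_le ha.le hy)))]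
    simp
  have hA1 : ∀ y, b ≤ y → A y = 0 := by
    intro y hy
    have hsplit := intervalIntegral.integral_add_adjacent_intervals
      (ηcont.intervalIntegrable 0 1 : IntervalIntegrable η volume 0 1)
      (ηcont.intervalIntegrable 1 y : IntervalIntegrable η volume 1 y)
    have h2 : ∫ t in (1:ℝ)..y, η t = 0 := by
      rw [intervalIntegral.integral_congr (g := fun _ => (0:ℝ))
        (fun t ht => hzb t (le_trans (le_inf hb.le hy) ht.1))]
      simp
    show ∫ t in (0:ℝ)..y, η t = 0
    rw [← hsplit, hmean, h2, add_zero]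
  set Aper : ℝ → ℝ := fun y => A (Int.fract y) with hAperdef
  have hAper_eq_nhds : ∀ y ∈ Set.Ioo (0:ℝ) 1, Aper =ᶠ[nhds y] A := by
    intro y hy
    filter_upwards [Ioo_mem_nhds hy.1 hy.2] with z hz
    rw [hAperdef]
    simp only
    rw [Int.fract_eq_self.mpr ⟨hz.1.le, hz.2⟩]
  have hApersm : ContDiff ℝ ∞ Aper := by
    rw [contDiff_iff_contDiffAt]
    intro x
    by_cases hx : Int.fract x = 0
    · have hxint : x = ((⌊x⌋ : ℤ) : ℝ) := by
        have h3 := Int.fract_add_floor x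
        rw [hx, zero_add] at h3
        exact h3.symm
      have hev : Aper =ᶠ[nhds x] (fun _ => (0:ℝ)) := by
        filter_upwards [Ioo_mem_nhds (show x - (1 - b) < x by linarith)
          (show x < x + a by linarith)] with z hz
        rw [hAperdef]
        simp only
        rcases le_or_gt x z with hzx | hzx
        · have hflz : ⌊z⌋ = ⌊x⌋ := by
            rw [Int.floor_eq_iff]
            push_cast
            constructor
            · linarith [hxint]
            · linarith [hz.2, hxint, ha1]
          have hfr : Int.fract z = z - ((⌊x⌋ : ℤ) : ℝ) := by
            rw [← Int.self_sub_floor, hflz]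
          apply hA0
          rw [hfr]
          linarith [hz.2, hxint]
        · have hflz : ⌊z⌋ = ⌊x⌋ - 1 := by
            rw [Int.floor_eq_iff]
            push_cast
            constructor
            · linarith [hz.1, hxint, hb0]
            · linarith [hxint]
          have hfr : Int.fract z = z - ((⌊x⌋ : ℤ) : ℝ) + 1 := by
            rw [← Int.self_sub_floor, hflz]
            push_cast
            ring
          apply hA1
          rw [hfr]
          linarith [hz.1, hxint]
      exact (contDiffAt_const (c := (0:ℝ))).congr_of_eventuallyEq hev
    · have hfl : ((⌊x⌋ : ℤ) : ℝ) < x := by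
        rcases lt_or_eq_of_le (Int.floor_le x) with h' | h'
        · exact h'
        · exfalso; apply hx; rw [← h', Int.fract_intCast]
      have hfu : x < (⌊x⌋ : ℝ) + 1 := Int.lt_floor_add_one x
      have hev : Aper =ᶠ[nhds x] (fun z => A (z - ((⌊x⌋ : ℤ) : ℝ))) := by
        filter_upwards [Ioo_mem_nhds hfl hfu] with z hz
        rw [hAperdef]
        simp only
        congr 1
        have hflz : ⌊z⌋ = ⌊x⌋ := by
          rw [Int.floor_eq_iff]
          push_cast
          exact ⟨hz.1.le, hz.2⟩
        rw [← Int.self_sub_floor, hflz]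
      have hsm : ContDiffAt ℝ ∞ (fun z => A (z - ((⌊x⌋ : ℤ) : ℝ))) x :=
        (hAsmooth.comp (contDiff_id.sub contDiff_const)).contDiffAt
      exact hsm.congr_of_eventuallyEq hev
  have hApercont : Continuous Aper := hApersm.continuous
  have hAperper : Function.Periodic Aper 1 := by
    intro y
    rw [hAperdef]
    simp only
    congr 1
    simpa using Int.fract_add_intCast y 1
  set m : ℝ := ∫ t in (0:ℝ)..1, Aper t with hmdef
  set g : ℝ → ℝ := fun t => Aper t - m with hgdef
  have hgcont : Continuous g := hApercont.sub continuous_const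
  have hgper : Function.Periodic g 1 := fun y => by simp [hgdef, hAperper y]
  set φ : ℝ → ℝ := fun y => ∫ t in (0:ℝ)..y, g t with hφdef
  have hφderiv : ∀ y, HasDerivAt φ (g y) y := fun y =>
    intervalIntegral.integral_hasDerivAt_right (hgcont.intervalIntegrable 0 y)
      (hgcont.stronglyMeasurableAtFilter (μ := volume) (l := nhds y)) hgcont.continuousAt
  have hderivφ : deriv φ = g := funext fun y => (hφderiv y).deriv
  have hφsmooth : ContDiff ℝ ∞ φ := by
    rw [contDiff_infty_iff_deriv]
    refine ⟨fun y => (hφderiv y).differentiableAt, ?_⟩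
    rw [hderivφ]
    exact hApersm.sub contDiff_const
  have h2le : (2 : WithTop ℕ∞) ≤ ∞ := by
    have h2le' : ((2:ℕ∞) : WithTop ℕ∞) ≤ ((⊤:ℕ∞) : WithTop ℕ∞) := WithTop.coe_le_coe.mpr le_top
    simpa using h2le'
  refine ⟨φ, hφsmooth.of_le h2le, ?_, ?_⟩
  · intro y
    have hsplit := intervalIntegral.integral_add_adjacent_intervals
      (hgcont.intervalIntegrable 0 y : IntervalIntegrable g volume 0 y)
      (hgcont.intervalIntegrable y (y+1) : IntervalIntegrable g volume y (y+1))
    have hlast : ∫ t in y..(y+1), g t = 0 := by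
      rw [hgper.intervalIntegral_add_eq y 0]
      rw [zero_add, hgdef]
      simp only
      rw [intervalIntegral.integral_sub (hApercont.intervalIntegrable 0 1)
        (intervalIntegrable_const), intervalIntegral.integral_const]
      rw [sub_zero, one_smul, sub_self]
    rw [hφdef]
    simp only
    rw [← hsplit, hlast, add_zero]
  · intro y hy
    rw [hderivφ, hgdef]
    rw [deriv_sub_const]
    have hch : deriv Aper y = deriv A y := (hAper_eq_nhds y hy).deriv_eq
    rw [hch, hderivA]

/-- tsupport of a difference is inside the union of tsupports. -/
lemma tsupport_sub_subset {f g : ℝ → ℝ} :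
    tsupport (fun y => f y - g y) ⊆ tsupport f ∪ tsupport g := by
  have h1 : Function.support (fun y => f y - g y) ⊆ tsupport f ∪ tsupport g := by
    intro x hx
    by_contra hc
    simp only [Set.mem_union, not_or] at hc
    have hf : f x = 0 := image_eq_zero_of_notMem_tsupport hc.1
    have hg : g x = 0 := image_eq_zero_of_notMem_tsupport hc.2
    simp [Function.mem_support, hf, hg] at hx
  have h2 : tsupport (fun y => f y - g y) ⊆ closure (tsupport f ∪ tsupport g) :=
    closure_mono h1
  rwa [IsClosed.closure_eq ((isClosed_tsupport f).union (isClosed_tsupport g))] at h2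

/-- Uniqueness of the invariant probability density for the one-dimensional operator with
coefficient `c`: any 1-periodic probability density `p` with `∫₀¹ c p φ'' = 0` for all
1-periodic C² test functions `φ` equals `HM(c)/c` almost everywhere. -/
theorem stmt_6 (c : ℝ → ℝ) (hcmeas : Measurable c)
    (hcper : ∀ y, c (y + 1) = c y)
    (lam Lam : ℝ) (hlam : 0 < lam)
    (hell : ∀ y, lam ≤ c y ∧ c y ≤ Lam)
    (p : ℝ → ℝ) (hpper : ∀ y, p (y + 1) = p y)
    (hpint : IntegrableOn p (Set.Icc (0:ℝ) 1))
    (hpnonneg : ∀ᵐ y ∂(volume : Measure ℝ), 0 ≤ p y)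
    (hpone : ∫ y in (0:ℝ)..1, p y = 1)
    (hpinv : ∀ φ : ℝ → ℝ, ContDiff ℝ 2 φ → (∀ y, φ (y + 1) = φ y) →
      ∫ y in (0:ℝ)..1, c y * p y * deriv (deriv φ) y = 0) :
    ∀ᵐ y ∂(volume : Measure ℝ), p y = HM c / c y := by
  have hLam : 0 < Lam := lt_of_lt_of_le hlam (le_trans (hell 0).1 (hell 0).2)
  have hcpos : ∀ y, 0 < c y := fun y => lt_of_lt_of_le hlam (hell y).1
  have hcnorm : ∀ y, ‖c y‖ ≤ Lam := fun y => by
    rw [Real.norm_eq_abs, abs_of_pos (hcpos y)]; exact (hell y).2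
  have hgInt : IntegrableOn (fun y => c y * p y) (Set.Ioc (0:ℝ) 1) :=
    (hpint.mono_set Set.Ioc_subset_Icc_self).bdd_mul
      (hcmeas.aestronglyMeasurable) (ae_of_all _ hcnorm)
  have hgψInt : ∀ ψ : ℝ → ℝ, Continuous ψ → (∃ C, ∀ x, ‖ψ x‖ ≤ C) →
      IntegrableOn (fun y => c y * p y * ψ y) (Set.Ioc (0:ℝ) 1) := by
    intro ψ hψc hψb
    have h0 := hgInt.bdd_mul (hψc.aestronglyMeasurable) (ae_of_all _ hψb.choose_spec)
    exact MeasureTheory.IntegrableOn.congr_fun h0 (fun x _ => by ring) measurableSet_Ioc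
  have conv1 : ∀ f : ℝ → ℝ, ∫ y in (0:ℝ)..1, f y = ∫ y in Set.Ioo (0:ℝ) 1, f y := by
    intro f
    rw [intervalIntegral.integral_of_le zero_le_one, integral_Ioc_eq_integral_Ioo]
  set bump : ContDiffBump (1/2 : ℝ) := ⟨1/4, 1/3, by norm_num, by norm_num⟩ with hbdef
  set ρ : ℝ → ℝ := bump.normed volume with hρdef
  have hρsm : ContDiff ℝ ∞ ρ := bump.contDiff_normed
  have hρcs : HasCompactSupport ρ := bump.hasCompactSupport_normed
  have hρsupp : tsupport ρ ⊆ Set.Ioo (0:ℝ) 1 := by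
    rw [hρdef, ContDiffBump.tsupport_normed_eq]
    intro x hx
    rw [Metric.mem_closedBall, Real.dist_eq] at hx
    have h1 : |x - 1/2| ≤ 1/3 := hx
    have h2 := abs_le.mp h1
    constructor
    · linarith [h2.1]
    · linarith [h2.2]
  have hρint1 : ∫ y in (0:ℝ)..1, ρ y = 1 := by
    rw [intervalIntegral.integral_of_le zero_le_one]
    rw [MeasureTheory.setIntegral_eq_integral_of_forall_compl_eq_zero
      (fun x hx => image_eq_zero_of_notMem_tsupport
        (fun hmem => hx (Set.Ioo_subset_Ioc_self (hρsupp hmem))))]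
    exact bump.integral_normed
  set K : ℝ := ∫ y in (0:ℝ)..1, c y * p y * ρ y with hKdef
  have hbound : ∀ ψ : ℝ → ℝ, Continuous ψ → HasCompactSupport ψ → ∃ C, ∀ x, ‖ψ x‖ ≤ C :=
    fun ψ hψc hψcs => hψc.bounded_above_of_compact_support hψcs
  have key : ∀ ψ : ℝ → ℝ, ContDiff ℝ ∞ ψ → HasCompactSupport ψ →
      tsupport ψ ⊆ Set.Ioo (0:ℝ) 1 →
      ∫ y in (0:ℝ)..1, c y * p y * ψ y = (∫ y in (0:ℝ)..1, ψ y) * K := by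
    intro ψ hψ hψcs hψsupp
    set r : ℝ := ∫ y in (0:ℝ)..1, ψ y with hrdef
    set η : ℝ → ℝ := fun y => ψ y - r * ρ y with hηdef
    have hηsm : ContDiff ℝ ∞ η := hψ.sub (contDiff_const.mul hρsm)
    have hηsupp : tsupport η ⊆ Set.Ioo (0:ℝ) 1 := by
      refine le_trans tsupport_sub_subset ?_
      apply Set.union_subset hψsupp
      refine le_trans ?_ hρsupp
      apply closure_mono
      intro x hx
      simp only [Function.mem_support] at hx ⊢
      intro h0
      apply hx; rw [h0]; ring
    have hηmean : ∫ y in (0:ℝ)..1, η y = 0 := by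
      rw [hηdef]
      simp only
      rw [intervalIntegral.integral_sub (hψ.continuous.intervalIntegrable 0 1)
        ((by exact continuous_const.mul hρsm.continuous : Continuous fun y => r * ρ y).intervalIntegrable 0 1)]
      rw [intervalIntegral.integral_const_mul, hρint1, ← hrdef]
      ring
    obtain ⟨φ, hφ2, hφper, hφd2⟩ := exists_periodic_test η hηsm hηsupp hηmean
    have hzero := hpinv φ hφ2 hφper
    have hcongr : ∫ y in (0:ℝ)..1, c y * p y * deriv (deriv φ) y
        = ∫ y in (0:ℝ)..1, c y * p y * η y := by
      rw [conv1, conv1]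
      apply MeasureTheory.setIntegral_congr_fun measurableSet_Ioo
      intro y hy
      show c y * p y * deriv (deriv φ) y = c y * p y * η y
      rw [hφd2 y hy]
    rw [hcongr] at hzero
    have hηint : ∫ y in (0:ℝ)..1, c y * p y * η y
        = (∫ y in (0:ℝ)..1, c y * p y * ψ y) - r * ∫ y in (0:ℝ)..1, c y * p y * ρ y := by
      have i1 : IntervalIntegrable (fun y => c y * p y * ψ y) volume 0 1 := by
        rw [intervalIntegrable_iff_integrableOn_Ioc_of_le zero_le_one]
        exact hgψInt ψ hψ.continuous (hbound ψ hψ.continuous hψcs)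
      have i2 : IntervalIntegrable (fun y => c y * p y * (r * ρ y)) volume 0 1 := by
        rw [intervalIntegrable_iff_integrableOn_Ioc_of_le zero_le_one]
        apply hgψInt (fun y => r * ρ y) (continuous_const.mul hρsm.continuous)
        obtain ⟨C, hC⟩ := hbound ρ hρsm.continuous hρcs
        exact ⟨|r| * C, fun x => by
          rw [norm_mul]
          apply mul_le_mul le_rfl (hC x) (norm_nonneg _) (abs_nonneg r)⟩
      have e : ∀ y, c y * p y * η y = c y * p y * ψ y - c y * p y * (r * ρ y) := by
        intro y; rw [hηdef]; ring
      rw [intervalIntegral.integral_congr (fun y _ => e y)]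
      rw [intervalIntegral.integral_sub i1 i2]
      congr 1
      have e2 : ∀ y, c y * p y * (r * ρ y) = r * (c y * p y * ρ y) := fun y => by ring
      rw [intervalIntegral.integral_congr (fun y _ => e2 y),
        intervalIntegral.integral_const_mul]
    rw [hηint, ← hKdef] at hzero
    linarith [hzero]
  have hae : ∀ᵐ y ∂(volume : Measure ℝ), y ∈ Set.Ioo (0:ℝ) 1 → c y * p y - K = 0 := by
    apply isOpen_Ioo.ae_eq_zero_of_integral_contDiff_smul_eq_zero
      (f := fun y => c y * p y - K)
    · apply IntegrableOn.locallyIntegrableOn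
      exact (hgInt.mono_set Set.Ioo_subset_Ioc_self).sub
        (integrableOn_const measure_Ioo_lt_top.ne)
    · intro ψ hψ hψcs hψsupp
      have hcompl : ∀ x ∉ Set.Ioo (0:ℝ) 1, ψ x • (c x * p x - K) = 0 := by
        intro x hx
        rw [image_eq_zero_of_notMem_tsupport (fun hmem => hx (hψsupp hmem)), zero_smul]
      rw [← MeasureTheory.setIntegral_eq_integral_of_forall_compl_eq_zero hcompl]
      have i1 : IntegrableOn (fun y => c y * p y * ψ y) (Set.Ioo (0:ℝ) 1) :=
        (hgψInt ψ hψ.continuous (hbound ψ hψ.continuous hψcs)).mono_set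
          Set.Ioo_subset_Ioc_self
      have i2 : IntegrableOn (fun y => K * ψ y) (Set.Ioo (0:ℝ) 1) :=
        ((continuous_const.mul hψ.continuous).integrableOn_Icc).mono_set
          Set.Ioo_subset_Icc_self
      have e : ∀ y, ψ y • (c y * p y - K) = c y * p y * ψ y - K * ψ y := by
        intro y; simp only [smul_eq_mul]; ring
      have hsi : ∫ y in Set.Ioo (0:ℝ) 1, ψ y • (c y * p y - K)
          = ∫ y in Set.Ioo (0:ℝ) 1, (c y * p y * ψ y - K * ψ y) :=
        MeasureTheory.setIntegral_congr_fun measurableSet_Ioo (fun y _ => e y)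
      rw [hsi]
      rw [MeasureTheory.integral_sub i1 i2]
      rw [← conv1, ← conv1]
      rw [key ψ hψ hψcs hψsupp, intervalIntegral.integral_const_mul]
      ring
  set I : ℝ := ∫ y in (0:ℝ)..1, (c y)⁻¹ with hIdef
  have hcinvInt : IntervalIntegrable (fun y => (c y)⁻¹) volume 0 1 := by
    rw [intervalIntegrable_iff_integrableOn_Ioc_of_le zero_le_one]
    apply Integrable.mono' (integrable_const lam⁻¹)
      (hcmeas.inv.aestronglyMeasurable)
    refine ae_of_all _ fun y => ?_
    rw [Real.norm_eq_abs, Pi.inv_apply, abs_of_pos (inv_pos.mpr (hcpos y))]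
    exact inv_anti₀ hlam (hell y).1
  have hIpos : 0 < I := by
    have h1 : ∫ y in (0:ℝ)..1, Lam⁻¹ ≤ I := by
      rw [hIdef]
      apply intervalIntegral.integral_mono_on zero_le_one intervalIntegrable_const hcinvInt
      intro y _
      exact inv_anti₀ (hcpos y) (hell y).2
    simp only [intervalIntegral.integral_const, smul_eq_mul, sub_zero, one_mul] at h1
    exact lt_of_lt_of_le (inv_pos.mpr hLam) h1
  have hpc : ∀ᵐ y ∂(volume : Measure ℝ), y ∈ Set.Ioo (0:ℝ) 1 → p y = K * (c y)⁻¹ := by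
    filter_upwards [hae] with y hy hyI
    have h1 := hy hyI
    have h2 : c y * p y = K := by linarith
    have h3 : p y = K / c y := by
      rw [eq_div_iff (hcpos y).ne']
      linear_combination h2
    rw [h3, div_eq_mul_inv]
  have honeKI : (1:ℝ) = K * I := by
    have h1 : ∫ y in Set.Ioo (0:ℝ) 1, p y = ∫ y in Set.Ioo (0:ℝ) 1, K * (c y)⁻¹ := by
      apply MeasureTheory.setIntegral_congr_ae measurableSet_Ioo
      filter_upwards [hpc] with y hy hyI
      exact hy hyI
    have h2 : ∫ y in Set.Ioo (0:ℝ) 1, K * (c y)⁻¹ = K * I := by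
      rw [MeasureTheory.integral_const_mul, hIdef, conv1]
    rw [← hpone, conv1, h1, h2]
  have hKH : K = HM c := by
    have hIne : I ≠ 0 := ne_of_gt hIpos
    have hKI : K = I⁻¹ := by
      have h2 : K * I * I⁻¹ = 1 * I⁻¹ := by rw [← honeKI]
      rwa [mul_assoc, mul_inv_cancel₀ hIne, mul_one, one_mul] at h2
    rw [hKI, HM, ← hIdef]
  have hq : ∀ᵐ y ∂(volume : Measure ℝ), (fun y => p y - HM c / c y) y = 0 := by
    apply periodic_ae_zero_aux
    · intro y
      show p (y + 1) - HM c / c (y + 1) = p y - HM c / c y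
      rw [hpper y, hcper y]
    · filter_upwards [hpc] with y hy hyI
      show p y - HM c / c y = 0
      rw [hy hyI, hKH, div_eq_mul_inv]
      ring
  filter_upwards [hq] with y hy
  have hy' : p y - HM c / c y = 0 := hy
  linarith [sub_eq_zero.mp hy']
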